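/- For all integers i, j ≥ 1, the following identity of rational numbers holds: (1/((i-1)(j-1)))·[ 2(i+j-2)·C(2j+i-3, i-2)·C(2i+j-3, j-2) - 4(i+j-1)·C(2j+i-3, i-3)·C(2i+j-3, j-3) - 2j·C(2j+i-3, i-3)·C(2i+j-3, j-2) - 2i·C(2j+i-3, i-2)·C(2i+j-3, j-3) ] = (1/(ij))·C(2j+i-2, i-1)·C(2i+j-2, j-1), where the left side is interpreted for i, j ≥ 2 (binomials C(n,k) with k < 0 are 0). -/

import Mathlib

/-- Binomial coefficient `C(n, k)` with integer lower index, with the convention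
`C(n, k) = 0` for `k < 0`, valued in `ℚ`. -/
def qchoose (n : ℕ) (k : ℤ) : ℚ := if k < 0 then 0 else (n.choose k.toNat : ℚ)

lemma qchoose_natCast (N a : ℕ) : qchoose N (a : ℤ) = (N.choose a : ℚ) := by
  simp [qchoose]

/-- `C(N, a-1) * (N - a + 1) = C(N, a) * a` in `ℚ`, with the `qchoose` convention. -/
lemma qchoose_sub_one (N a : ℕ) (h : a ≤ N + 1) :
    qchoose N ((a : ℤ) - 1) * ((N : ℚ) - a + 1) = (N.choose a : ℚ) * a := by
  cases a with
  | zero => simp [qchoose]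
  | succ n =>
    have h1 : ((n + 1 : ℕ) : ℤ) - 1 = (n : ℤ) := by push_cast; ring
    rw [h1, qchoose_natCast]
    have hn : n ≤ N := by omega
    have key := Nat.choose_succ_right_eq N n
    have key' : ((N.choose (n+1) : ℚ)) * ((n:ℚ)+1) = (N.choose n : ℚ) * ((N:ℚ) - n) := by
      have := congrArg (fun x : ℕ => (x : ℚ)) key
      push_cast [Nat.cast_sub hn] at this
      linarith [this]
    push_cast
    linarith [key']

/-- `C(N+1, a+1) * (a+1) = (N+1) * C(N, a)` in `ℚ`. -/
lemma choose_succ_succ_q (N a : ℕ) :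
    ((N+1).choose (a+1) : ℚ) * ((a:ℚ)+1) = ((N:ℚ)+1) * (N.choose a : ℚ) := by
  have := Nat.add_one_mul_choose_eq N a
  have := congrArg (fun x : ℕ => (x : ℚ)) this
  push_cast at this
  linarith [this]


lemma collapse_alg (a b X Y : ℚ) (h1 : a+1 ≠ 0) (h2 : b+1 ≠ 0) (h3 : a+2 ≠ 0) (h4 : b+2 ≠ 0)
    (h5 : 2*a+4 ≠ 0) (h6 : 2*b+4 ≠ 0) :
    1/((a+1)*(b+1)) * (2*(a+b+2)*X*Y - 4*(a+b+3)*(X*a/(2*b+4))*(Y*b/(2*a+4))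
      - 2*(b+2)*(X*a/(2*b+4))*Y - 2*(a+2)*X*(Y*b/(2*a+4)))
    = 1/((a+2)*(b+2)) * ((2*b+a+4)*X/(a+1)) * ((2*a+b+4)*Y/(b+1)) := by
  have e5 : 2*a+4 = 2*(a+2) := by ring
  have e6 : 2*b+4 = 2*(b+2) := by ring
  rw [e5, e6]
  field_simp
  ring


set_option maxHeartbeats 2000000 in
/-- Final step of the bivariate Lagrange inversion computation for fighting fish: the four
binomial terms collapse into the closed product formula, for all integers `i, j ≥ 2`. -/
theorem lagrange_collapse (i j : ℕ) (hi : 2 ≤ i) (hj : 2 ≤ j) :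
    (1 / (((i : ℚ) - 1) * ((j : ℚ) - 1))) *
      (2 * ((i : ℚ) + (j : ℚ) - 2) *
          qchoose (2*j + i - 3) ((i : ℤ) - 2) * qchoose (2*i + j - 3) ((j : ℤ) - 2)
        - 4 * ((i : ℚ) + (j : ℚ) - 1) *
          qchoose (2*j + i - 3) ((i : ℤ) - 3) * qchoose (2*i + j - 3) ((j : ℤ) - 3)
        - 2 * (j : ℚ) *
          qchoose (2*j + i - 3) ((i : ℤ) - 3) * qchoose (2*i + j - 3) ((j : ℤ) - 2)
        - 2 * (i : ℚ) *
          qchoose (2*j + i - 3) ((i : ℤ) - 2) * qchoose (2*i + j - 3) ((j : ℤ) - 3))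
      = (1 / ((i : ℚ) * (j : ℚ))) *
          qchoose (2*j + i - 2) ((i : ℤ) - 1) * qchoose (2*i + j - 2) ((j : ℤ) - 1) := by
  obtain ⟨a, rfl⟩ := Nat.exists_eq_add_of_le' hi
  obtain ⟨b, rfl⟩ := Nat.exists_eq_add_of_le' hj
  have e1 : 2*(b+2) + (a+2) - 3 = 2*b+a+3 := by omega
  have e2 : 2*(a+2) + (b+2) - 3 = 2*a+b+3 := by omega
  have e3 : 2*(b+2) + (a+2) - 2 = (2*b+a+3) + 1 := by omega
  have e4 : 2*(a+2) + (b+2) - 2 = (2*a+b+3) + 1 := by omega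
  have f1 : ((a+2 : ℕ) : ℤ) - 2 = (a : ℤ) := by push_cast; ring
  have f2 : ((a+2 : ℕ) : ℤ) - 3 = (a : ℤ) - 1 := by push_cast; ring
  have f3 : ((a+2 : ℕ) : ℤ) - 1 = ((a+1 : ℕ) : ℤ) := by push_cast; ring
  have g1 : ((b+2 : ℕ) : ℤ) - 2 = (b : ℤ) := by push_cast; ring
  have g2 : ((b+2 : ℕ) : ℤ) - 3 = (b : ℤ) - 1 := by push_cast; ring
  have g3 : ((b+2 : ℕ) : ℤ) - 1 = ((b+1 : ℕ) : ℤ) := by push_cast; ring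
  rw [e1, e2, e3, e4, f1, f2, f3, g1, g2, g3]
  set N := 2*b+a+3 with hN
  set M := 2*a+b+3 with hM
  have hNQ : (N : ℚ) = 2*b+a+3 := by rw [hN]; push_cast; ring
  have hMQ : (M : ℚ) = 2*a+b+3 := by rw [hM]; push_cast; ring
  set X : ℚ := (N.choose a : ℚ) with hX
  set Y : ℚ := (M.choose b : ℚ) with hY
  have hA : qchoose N (a : ℤ) = X := qchoose_natCast N a
  have hB : qchoose M (b : ℤ) = Y := qchoose_natCast M b
  have hA' : qchoose N ((a : ℤ) - 1) = X * a / (2*b+4) := by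
    have h := qchoose_sub_one N a (by omega)
    have hna : (N:ℚ) - a + 1 = 2*b+4 := by rw [hNQ]; ring
    rw [hna] at h
    field_simp
    linarith [h]
  have hB' : qchoose M ((b : ℤ) - 1) = Y * b / (2*a+4) := by
    have h := qchoose_sub_one M b (by omega)
    have hmb : (M:ℚ) - b + 1 = 2*a+4 := by rw [hMQ]; ring
    rw [hmb] at h
    field_simp
    linarith [h]
  have hA1 : qchoose (N+1) ((a+1 : ℕ) : ℤ) = ((N:ℚ)+1) * X / ((a:ℚ)+1) := by
    rw [qchoose_natCast]
    have := choose_succ_succ_q N a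
    have ha : (a:ℚ)+1 ≠ 0 := by positivity
    field_simp
    linarith [this]
  have hB1 : qchoose (M+1) ((b+1 : ℕ) : ℤ) = ((M:ℚ)+1) * Y / ((b:ℚ)+1) := by
    rw [qchoose_natCast]
    have := choose_succ_succ_q M b
    field_simp
    linarith [this]
  rw [hA, hB, hA', hB', hA1, hB1, hNQ, hMQ]
  push_cast
  have h1 : (a:ℚ)+1 ≠ 0 := by positivity
  have h2 : (b:ℚ)+1 ≠ 0 := by positivity
  have h3 : (a:ℚ)+2 ≠ 0 := by positivity
  have h4 : (b:ℚ)+2 ≠ 0 := by positivity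
  have h5 : 2*(a:ℚ)+4 ≠ 0 := by positivity
  have h6 : 2*(b:ℚ)+4 ≠ 0 := by positivity
  have key := collapse_alg (a:ℚ) (b:ℚ) X Y h1 h2 h3 h4 h5 h6
  linear_combination key
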